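/- Assume the continuum hypothesis (2^ℵ₀ = ℵ₁). Then every countable dense subset Y of ℂ is universal: for every set X ⊆ ℂ with |X| < 2^ℵ₀ there is a non-constant entire function f with f(X) ⊆ Y. -/

import Mathlib

open Finset Metric

/-- In a dense subset of ℂ we can find a point in any ball avoiding any given point. -/
lemma dense_pick {Y : Set ℂ} (hYd : Dense Y) (c : ℂ) {r : ℝ} (hr : 0 < r) (a : ℂ) :
    ∃ y ∈ Y, dist y c < r ∧ y ≠ a := by
  have hopen : IsOpen (Metric.ball c r \ {a}) :=
    IsOpen.sdiff isOpen_ball isClosed_singleton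
  have hp : ∀ t : ℂ, ‖t‖ = r / 2 → c + t ∈ Metric.ball c r := by
    intro t ht
    simp [Metric.mem_ball, dist_eq_norm, ht]
    linarith
  have hne : (Metric.ball c r \ {a}).Nonempty := by
    rcases eq_or_ne (c + (r / 2 : ℝ)) a with h | h
    · refine ⟨c + (-(r / 2 : ℝ) : ℂ), hp _ (by rw [norm_neg, Complex.norm_real, Real.norm_eq_abs, abs_of_pos (by linarith)]), ?_⟩
      simp only [Set.mem_singleton_iff, ← h]
      intro hcontra
      have : (-(r / 2 : ℝ) : ℂ) = ((r / 2 : ℝ) : ℂ) := by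
        have := add_left_cancel hcontra
        exact_mod_cast this
      have : -(r/2 : ℝ) = r/2 := by exact_mod_cast this
      linarith
    · exact ⟨c + (r / 2 : ℝ), hp _ (by rw [Complex.norm_real, Real.norm_eq_abs, abs_of_pos (by linarith)]), h⟩
  obtain ⟨y, hyY, hyU⟩ := hYd.exists_mem_open hopen hne
  exact ⟨y, hyY, Metric.mem_ball.1 hyU.1, hyU.2⟩

theorem countable_dense_universal_of_CH
    (hCH : Cardinal.continuum = Cardinal.aleph 1)
    (Y : Set ℂ) (hYc : Y.Countable) (hYd : Dense Y)
    (X : Set ℂ) (hX : Cardinal.mk X < Cardinal.continuum) :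
    ∃ f : ℂ → ℂ, Differentiable ℂ f ∧ (∀ c : ℂ, f ≠ fun _ => c) ∧ f '' X ⊆ Y := by
  classical
  -- X is countable
  have hCH0 : (Cardinal.continuum : Cardinal.{0}) = Cardinal.aleph 1 := by
    have h := hCH
    rw [← Cardinal.lift_continuum.{_, 0}, ← Ordinal.lift_one.{0}, ← Cardinal.lift_aleph,
      Cardinal.lift_inj] at h
    exact h
  have hXc : X.Countable := (Cardinal.countable_iff_lt_aleph_one X).2 (hX.trans_eq hCH0)
  -- a countably infinite superset of X, enumerated injectively
  set S : Set ℂ := X ∪ Set.range ((↑) : ℕ → ℂ) with hS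
  have hSc : S.Countable := hXc.union (Set.countable_range _)
  have hSinf : S.Infinite :=
    (Set.infinite_range_of_injective Nat.cast_injective).mono Set.subset_union_right
  obtain ⟨d⟩ := Set.countable_infinite_iff_nonempty_denumerable.1 ⟨hSc, hSinf⟩
  let e : ℕ ≃ S := (Denumerable.eqv S).symm
  let z : ℕ → ℂ := fun n => (e n : ℂ)
  have hzinj : Function.Injective z := fun a b h => e.injective (Subtype.val_injective h)
  have hXz : X ⊆ Set.range z := by
    intro x hx
    refine ⟨e.symm ⟨x, Or.inl hx⟩, ?_⟩
    simp [z]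
  -- the polynomials ∏_{m<n} (w - z m)
  set P : ℕ → ℂ → ℂ := fun n w => ∏ m ∈ Finset.range n, (w - z m) with hP
  have hPdiff : ∀ n, Differentiable ℂ (P n) := by
    intro n
    induction n with
    | zero => simpa [hP] using (differentiable_const (1:ℂ))
    | succ n ih =>
      have hrw : P (n+1) = fun w => P n w * (w - z n) := by
        funext w; simp [hP, Finset.prod_range_succ]
      rw [hrw]
      exact ih.mul (differentiable_id.sub (differentiable_const _))
  set C : ℝ → ℕ → ℝ := fun R n => ∏ m ∈ Finset.range n, (R + ‖z m‖ + 1) with hC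
  have hCpos : ∀ R n, 0 ≤ R → 0 < C R n := fun R n hR =>
    Finset.prod_pos fun m _ => by positivity
  have hCmono : ∀ R R' n, 0 ≤ R → R ≤ R' → C R n ≤ C R' n := by
    intro R R' n hR hRR
    exact Finset.prod_le_prod (fun m _ => by positivity) (fun m _ => by linarith)
  have hPbound : ∀ (R : ℝ) (n : ℕ) (w : ℂ), ‖w‖ ≤ R → ‖P n w‖ ≤ C R n := by
    intro R n w hw
    calc ‖P n w‖ ≤ ∏ m ∈ Finset.range n, ‖w - z m‖ := norm_prod_le _ _
      _ ≤ C R n := Finset.prod_le_prod (fun m _ => norm_nonneg _)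
          (fun m _ => by
            have h := norm_sub_le w (z m)
            linarith)
  set M : ℕ → ℝ := fun n => C n n with hM
  have hMpos : ∀ n, 0 < M n := fun n => hCpos _ _ (Nat.cast_nonneg n)
  set ε : ℕ → ℝ := fun n => (1/2 : ℝ)^n / M n with hε
  have hεpos : ∀ n, 0 < ε n := fun n => div_pos (by positivity) (hMpos n)
  have hPz_ne : ∀ n, P n (z n) ≠ 0 := by
    intro n
    refine Finset.prod_ne_zero_iff.2 fun m hm => ?_
    have hmn : m ≠ n := Nat.ne_of_lt (Finset.mem_range.1 hm)
    exact sub_ne_zero.2 fun h => hmn (hzinj h).symm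
  have hPz_zero : ∀ k n, n < k → P k (z n) = 0 := by
    intro k n h
    exact Finset.prod_eq_zero (Finset.mem_range.2 h) (by simp)
  -- one step of the recursive choice
  have hstep : ∀ (w : ℕ → ℂ) (n : ℕ), ∃ ξ : ℂ, ‖ξ‖ ≤ ε n ∧
      ((∑ k ∈ Finset.range n, w k * P k (z n)) + ξ * P n (z n)) ∈ Y ∧
      (n = 1 → (∑ k ∈ Finset.range n, w k * P k (z n)) + ξ * P n (z n) ≠ w 0) := by
    intro w n
    set A := ∑ k ∈ Finset.range n, w k * P k (z n) with hA
    set B := P n (z n) with hB'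
    have hB : B ≠ 0 := hPz_ne n
    have hr : 0 < ε n * ‖B‖ := mul_pos (hεpos n) (norm_pos_iff.2 hB)
    obtain ⟨y, hyY, hyd, hya⟩ := dense_pick hYd A hr (w 0)
    have hval : A + (y - A) / B * B = y := by field_simp; ring
    refine ⟨(y - A) / B, ?_, by rw [hval]; exact hyY, fun _ => by rw [hval]; exact hya⟩
    rw [norm_div, div_le_iff₀ (norm_pos_iff.2 hB)]
    rw [← dist_eq_norm]
    exact hyd.le
  -- the recursively chosen coefficients
  let s : ℕ → ℕ → ℂ := fun n =>
    Nat.rec (motive := fun _ => ℕ → ℂ) (fun _ => 0)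
      (fun n prev => Function.update prev n (Classical.choose (hstep prev n))) n
  let ξ : ℕ → ℂ := fun n => Classical.choose (hstep (s n) n)
  have hs_succ : ∀ n, s (n+1) = Function.update (s n) n (ξ n) := fun n => rfl
  have hagree : ∀ n k, k < n → s n k = ξ k := by
    intro n
    induction n with
    | zero => intro k hk; omega
    | succ n ih =>
      intro k hk
      rw [hs_succ]
      rcases eq_or_lt_of_le (Nat.lt_succ_iff.1 hk) with h | h
      · subst h; simp
      · rw [Function.update_of_ne (Nat.ne_of_lt h)]; exact ih k h
  have hspec : ∀ n, ‖ξ n‖ ≤ ε n ∧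
      ((∑ k ∈ Finset.range n, ξ k * P k (z n)) + ξ n * P n (z n)) ∈ Y ∧
      (n = 1 → (∑ k ∈ Finset.range n, ξ k * P k (z n)) + ξ n * P n (z n) ≠ ξ 0) := by
    intro n
    have h := Classical.choose_spec (hstep (s n) n)
    have hsum : ∑ k ∈ Finset.range n, s n k * P k (z n)
        = ∑ k ∈ Finset.range n, ξ k * P k (z n) :=
      Finset.sum_congr rfl fun k hk => by rw [hagree n k (Finset.mem_range.1 hk)]
    have e2 := congrArg (fun S => S + ξ n * P n (z n)) hsum
    refine ⟨h.1, Set.mem_of_eq_of_mem e2.symm h.2.1, fun h1 hc => ?_⟩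
    exact (h.2.2 h1) ((e2.trans hc).trans (hagree n 0 (by omega)).symm)
  -- the entire function
  set f : ℂ → ℂ := fun w => ∑' n, ξ n * P n w with hf
  have hfz : ∀ n, f (z n) = (∑ k ∈ Finset.range n, ξ k * P k (z n)) + ξ n * P n (z n) := by
    intro n
    rw [hf]
    show (∑' (k : ℕ), ξ k * P k (z n)) = _
    rw [tsum_eq_sum (s := Finset.range (n+1)) (fun k hk => ?_)]
    · exact Finset.sum_range_succ _ n
    · have hk' : n < k := by
        rcases Nat.lt_or_ge k (n+1) with h | h
        · exact absurd (Finset.mem_range.2 h) hk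
        · omega
      rw [hPz_zero k n hk', mul_zero]
  have hfY : ∀ n, f (z n) ∈ Y := fun n => by rw [hfz n]; exact (hspec n).2.1
  have himg : f '' X ⊆ Y := by
    rintro _ ⟨x, hx, rfl⟩
    obtain ⟨n, rfl⟩ := hXz hx
    exact hfY n
  have hf0 : f (z 0) = ξ 0 := by
    rw [hfz 0]; simp [hP]
  have hf1 : f (z 1) ≠ ξ 0 := by rw [hfz 1]; exact (hspec 1).2.2 rfl
  have hnc : ∀ c : ℂ, f ≠ fun _ => c := by
    intro c hc
    have h0 : f (z 0) = c := congrFun hc (z 0)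
    have h1 : f (z 1) = c := congrFun hc (z 1)
    exact hf1 ((h1.trans h0.symm).trans hf0)
  have hdiff : Differentiable ℂ f := by
    intro w0
    obtain ⟨N, hN⟩ := exists_nat_ge (‖w0‖ + 1)
    have hw0 : w0 ∈ Metric.ball (0:ℂ) N := by
      rw [mem_ball_zero_iff]; linarith
    have hu : Summable (fun n => ‖ξ n‖ * C N n) := by
      have key : ∀ n, N ≤ n → ‖ξ n‖ * C N n ≤ (1/2:ℝ)^n := by
        intro n hn
        have h1 : C (N:ℝ) n ≤ M n := hCmono _ _ n (Nat.cast_nonneg N) (by exact_mod_cast hn)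
        have h2 : ‖ξ n‖ ≤ ε n := (hspec n).1
        calc ‖ξ n‖ * C N n ≤ ε n * M n :=
              mul_le_mul h2 h1 (hCpos _ _ (Nat.cast_nonneg N)).le (hεpos n).le
          _ = (1/2:ℝ)^n := by rw [hε]; exact div_mul_cancel₀ _ (hMpos n).ne'
      have hsum : Summable (fun n => ‖ξ (n + N)‖ * C N (n + N)) := by
        refine Summable.of_nonneg_of_le (fun n => by positivity)
          (fun n => key (n + N) (by omega)) ?_
        exact (summable_nat_add_iff N).2 (summable_geometric_of_lt_one (by norm_num) (by norm_num))
      exact (summable_nat_add_iff N).1 hsum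
    have hdo : DifferentiableOn ℂ f (Metric.ball (0:ℂ) N) := by
      rw [hf]
      refine Complex.differentiableOn_tsum_of_summable_norm hu
        (fun n => ((hPdiff n).const_mul (ξ n)).differentiableOn) isOpen_ball ?_
      intro n w hw
      rw [norm_mul]
      exact mul_le_mul_of_nonneg_left
        (hPbound N n w (mem_ball_zero_iff.1 hw).le) (norm_nonneg _)
    exact hdo.differentiableAt (isOpen_ball.mem_nhds hw0)
  exact ⟨f, hdiff, hnc, himg⟩
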